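/- Let λ > 0 and let h, g be analytic on 𝔻 with h(0) = 0, h'(0) = 1, g(0) = 0, g'(0) = 0. Then the harmonic function f = h + conj∘g belongs to Ω_H^0(λ) if and only if for every ζ ∈ ℂ with |ζ| = 1 the analytic function F_ζ(z) = h(z) + ζ·g(z) belongs to Ω(λ). -/

import Mathlib

open Complex

noncomputable section

/-- The open unit disk in the complex plane. -/
def unitDisk : Set ℂ := {z : ℂ | ‖z‖ < 1}

/-- The class `Ω_H^0(λ)` of harmonic mappings `f = h + conj ∘ g`. -/
def OmegaH0 (lam : ℝ) (h g : ℂ → ℂ) : Prop :=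
  AnalyticOnNhd ℂ h unitDisk ∧ AnalyticOnNhd ℂ g unitDisk ∧
    h 0 = 0 ∧ deriv h 0 = 1 ∧ g 0 = 0 ∧ deriv g 0 = 0 ∧
    ∀ z ∈ unitDisk,
      ‖h z - z * deriv h z‖ < lam - ‖g z - z * deriv g z‖

/-- The class `Ω(λ)` of analytic functions. -/
def OmegaA (lam : ℝ) (F : ℂ → ℂ) : Prop :=
  AnalyticOnNhd ℂ F unitDisk ∧ F 0 = 0 ∧ deriv F 0 = 1 ∧
    ∀ z ∈ unitDisk, ‖F z - z * deriv F z‖ < lam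

theorem stmt0 (lam : ℝ) (hlam : 0 < lam) (h g : ℂ → ℂ)
    (hh : AnalyticOnNhd ℂ h unitDisk) (hg : AnalyticOnNhd ℂ g unitDisk)
    (h0 : h 0 = 0) (h1 : deriv h 0 = 1) (g0 : g 0 = 0) (g1 : deriv g 0 = 0) :
    OmegaH0 lam h g ↔
      ∀ ζ : ℂ, ‖ζ‖ = 1 → OmegaA lam (fun z => h z + ζ * g z) := by
  have h0mem : (0:ℂ) ∈ unitDisk := by simp [unitDisk]
  have hderiv : ∀ ζ : ℂ, ∀ z ∈ unitDisk,
      deriv (fun w => h w + ζ * g w) z = deriv h z + ζ * deriv g z := by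
    intro ζ z hz
    have dh := (hh z hz).differentiableAt
    have dg := (hg z hz).differentiableAt
    rw [deriv_fun_add dh (dg.const_mul ζ), deriv_const_mul ζ dg]
  constructor
  · rintro ⟨-, -, -, -, -, -, hbound⟩ ζ hζ
    refine ⟨hh.add (analyticOnNhd_const.mul hg), by simp [h0, g0], ?_, ?_⟩
    · rw [hderiv ζ 0 h0mem, h1, g1]; ring
    · intro z hz
      rw [hderiv ζ z hz]
      have hb := hbound z hz
      have hGnn : 0 ≤ ‖g z - z * deriv g z‖ := norm_nonneg _
      calc ‖h z + ζ * g z - z * (deriv h z + ζ * deriv g z)‖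
          = ‖(h z - z * deriv h z) + ζ * (g z - z * deriv g z)‖ := by
            ring_nf
        _ ≤ ‖h z - z * deriv h z‖
            + ‖ζ * (g z - z * deriv g z)‖ := norm_add_le _ _
        _ = ‖h z - z * deriv h z‖
            + ‖g z - z * deriv g z‖ := by rw [norm_mul, hζ, one_mul]
        _ < lam := by linarith
  · intro hΩ
    refine ⟨hh, hg, h0, h1, g0, g1, ?_⟩
    intro z hz
    set H := h z - z * deriv h z with hH
    set G := g z - z * deriv g z with hG
    set sH : ℂ := if H = 0 then 1 else H / (‖H‖ : ℂ) with hsH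
    set tG : ℂ := if G = 0 then 1 else (‖G‖ : ℂ) / G with htG
    have habsH : ‖sH‖ = 1 := by
      by_cases hc : H = 0
      · simp [hsH, hc]
      · have : ‖H‖ ≠ 0 := norm_ne_zero_iff.mpr hc
        simp [hsH, hc, norm_div, Complex.norm_real, norm_norm,
          _root_.abs_of_nonneg (norm_nonneg H), div_self this]
    have habsT : ‖tG‖ = 1 := by
      by_cases hc : G = 0
      · simp [htG, hc]
      · have : ‖G‖ ≠ 0 := norm_ne_zero_iff.mpr hc
        simp [htG, hc, norm_div, Complex.norm_real, norm_norm,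
          _root_.abs_of_nonneg (norm_nonneg G), div_self this]
    set ζ : ℂ := sH * tG with hζdef
    have hζabs : ‖ζ‖ = 1 := by rw [hζdef, norm_mul, habsH, habsT, one_mul]
    have htGG : tG * G = (‖G‖ : ℂ) := by
      by_cases hc : G = 0
      · simp [htG, hc]
      · rw [htG, if_neg hc]; field_simp
    have hkey : ‖H + ζ * G‖ = ‖H‖ + ‖G‖ := by
      have : ζ * G = sH * (‖G‖ : ℂ) := by
        rw [hζdef, mul_assoc, htGG]
      rw [this]
      by_cases hc : H = 0
      · simp [hsH, hc, Complex.norm_real, norm_norm, _root_.abs_of_nonneg (norm_nonneg G)]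
      · have hne : (‖H‖ : ℂ) ≠ 0 := by
          simpa using norm_ne_zero_iff.mpr hc
        have : H + sH * (‖G‖ : ℂ)
            = H * ((‖H‖ + ‖G‖ : ℝ) : ℂ) / (‖H‖ : ℂ) := by
          rw [hsH, if_neg hc]
          push_cast
          field_simp
        rw [this, norm_div, norm_mul, Complex.norm_real, Complex.norm_real, Real.norm_eq_abs, Real.norm_eq_abs,
          _root_.abs_of_nonneg (by positivity : (0:ℝ) ≤ ‖H‖ + ‖G‖),
          _root_.abs_of_nonneg (norm_nonneg H), mul_comm, mul_div_assoc,
          div_self (norm_ne_zero_iff.mpr hc), mul_one]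
    have hb := (hΩ ζ hζabs).2.2.2 z hz
    rw [hderiv ζ z hz] at hb
    have heq : h z + ζ * g z - z * (deriv h z + ζ * deriv g z) = H + ζ * G := by
      rw [hH, hG]; ring
    rw [heq, hkey] at hb
    linarith
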